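/- If p is a homogeneous H-stable polynomial in m variables and Z ∈ ℂ^m has Re(Z_i) ≥ 0 for all i, then |p(Z)| ≥ |p(Re Z_1, …, Re Z_m)|. -/

import Mathlib

open MvPolynomial Polynomial Complex

lemma eval_smul_homog {m n : ℕ} {p : MvPolynomial (Fin m) ℂ} (hp : p.IsHomogeneous n)
    (c : ℂ) (z : Fin m → ℂ) :
    MvPolynomial.eval (fun i => c * z i) p = c ^ n * MvPolynomial.eval z p := by
  rw [MvPolynomial.eval_eq, MvPolynomial.eval_eq, Finset.mul_sum]
  refine Finset.sum_congr rfl fun d hd => ?_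
  have hdeg : ∑ i ∈ d.support, d i = n := by
    have := hp (MvPolynomial.mem_support_iff.mp hd)
    rwa [show (1 : Fin m → ℕ) = fun _ => 1 from rfl, ← Finsupp.degree_eq_weight_one,
      Finsupp.degree_apply] at this
  calc MvPolynomial.coeff d p * ∏ i ∈ d.support, (c * z i) ^ d i
      = MvPolynomial.coeff d p * ((∏ i ∈ d.support, c ^ d i) * ∏ i ∈ d.support, z i ^ d i) := by
        rw [← Finset.prod_mul_distrib]; simp_rw [mul_pow]
    _ = c ^ n * (MvPolynomial.coeff d p * ∏ i ∈ d.support, z i ^ d i) := by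
        rw [Finset.prod_pow_eq_pow_sum, hdeg]; ring

lemma prod_abs_le_aux {s : Multiset ℂ} (h : ∀ a ∈ s, a.im = 0) :
    (s.map (fun a => ‖a‖)).prod
      ≤ (s.map (fun a => ‖Complex.I - a‖)).prod := by
  induction s using Multiset.induction_on with
  | empty => simp
  | cons a s ih =>
    simp only [Multiset.map_cons, Multiset.prod_cons]
    have ha : a.im = 0 := h a (Multiset.mem_cons_self a s)
    have h1 : ‖a‖ ≤ ‖Complex.I - a‖ := by
      rw [Complex.norm_def, Complex.norm_def]
      apply Real.sqrt_le_sqrt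
      simp only [Complex.normSq_apply, Complex.sub_re, Complex.sub_im, Complex.I_re,
        Complex.I_im, ha]
      nlinarith
    refine mul_le_mul h1 (ih fun a ha => h a (Multiset.mem_cons_of_mem ha)) ?_ ?_
    · exact Multiset.prod_nonneg (by
        intro x hx
        obtain ⟨b, _, rfl⟩ := Multiset.mem_map.mp hx
        exact norm_nonneg b)
    · exact norm_nonneg _

lemma stmt_aux (m n : ℕ) (p : MvPolynomial (Fin m) ℂ) (hp : p.IsHomogeneous n)
    (hst : ∀ z : Fin m → ℂ, (∀ i, 0 < (z i).re) → MvPolynomial.eval z p ≠ 0)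
    (Z : Fin m → ℂ) (hZ : ∀ i, 0 < (Z i).re) :
    ‖MvPolynomial.eval Z p‖
      ≥ ‖MvPolynomial.eval (fun i => ((Z i).re : ℂ)) p‖ := by
  set q : Polynomial ℂ :=
    MvPolynomial.aeval (fun i => Polynomial.C ((Z i).re : ℂ)
      + Polynomial.C ((Z i).im : ℂ) * Polynomial.X) p with hq
  have heval : ∀ t : ℂ, q.eval t
      = MvPolynomial.eval (fun i => ((Z i).re : ℂ) + ((Z i).im : ℂ) * t) p := by
    intro t
    rw [hq, MvPolynomial.aeval_def]
    refine (MvPolynomial.eval₂_comp_left (Polynomial.evalRingHom t) (algebraMap ℂ ℂ[X])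
      _ p).trans ?_
    rw [MvPolynomial.eval₂_eq, MvPolynomial.eval_eq]
    refine Finset.sum_congr rfl fun d hd => ?_
    simp [Function.comp]
  -- every root of q is real
  have hroots : ∀ r ∈ q.roots, r.im = 0 := by
    intro r hr
    by_contra him
    have hre : q.eval r = 0 := Polynomial.isRoot_of_mem_roots hr
    set w : Fin m → ℂ := fun i => ((Z i).re : ℂ) + ((Z i).im : ℂ) * r with hw
    set u : ℂ := ((r.im ^ 2 : ℝ) : ℂ) + ((r.re * r.im : ℝ) : ℂ) * Complex.I with hu
    have hure : ∀ i, (u * w i).re = r.im ^ 2 * (Z i).re := by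
      intro i
      simp only [hu, hw, Complex.add_re, Complex.add_im, Complex.mul_re, Complex.mul_im,
        Complex.ofReal_re, Complex.ofReal_im, Complex.I_re, Complex.I_im]
      ring
    have hne := hst (fun i => u * w i) (by
      intro i
      rw [hure i]
      have : (0:ℝ) < r.im ^ 2 := by positivity
      exact mul_pos this (hZ i))
    rw [eval_smul_homog hp u w] at hne
    have h0 : MvPolynomial.eval w p = 0 := by rw [hw, ← heval r]; exact hre
    simp [h0] at hne
  have hq0eval : q.eval 0 = MvPolynomial.eval (fun i => ((Z i).re : ℂ)) p := by
    rw [heval 0]; simp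
  have hqIeval : q.eval Complex.I = MvPolynomial.eval Z p := by
    rw [heval Complex.I,
      show (fun i => ((Z i).re : ℂ) + ((Z i).im : ℂ) * Complex.I) = Z from
        funext fun i => Complex.re_add_im (Z i)]
  have hfac := Polynomial.Splits.eq_prod_roots (IsAlgClosed.splits q)
  have habs : ∀ t : ℂ, ‖q.eval t‖
      = ‖q.leadingCoeff‖ * (q.roots.map (fun a => ‖t - a‖)).prod := by
    intro t
    conv_lhs => rw [hfac]
    rw [Polynomial.eval_mul, Polynomial.eval_C, Polynomial.eval_multiset_prod, norm_mul,
      (fun s : Multiset ℂ => (by exact map_multiset_prod (normHom (α := ℂ)) s :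
        ‖s.prod‖ = (s.map (fun x => ‖x‖)).prod))]
    simp [Multiset.map_map, Function.comp_def]
  have key : ‖q.eval 0‖ ≤ ‖q.eval Complex.I‖ := by
    rw [habs 0, habs Complex.I]
    apply mul_le_mul_of_nonneg_left _ (norm_nonneg _)
    have : (q.roots.map fun a => ‖(0:ℂ) - a‖)
        = q.roots.map fun a => ‖a‖ := by
      apply Multiset.map_congr rfl
      intro a _
      rw [zero_sub, norm_neg]
    rw [this]
    exact prod_abs_le_aux hroots
  rw [hq0eval, hqIeval] at key
  exact key

/-- for a homogeneous H-stable polynomial p and Z with Re(Z_i) ≥ 0,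
|p(Z)| ≥ |p(Re Z)|. -/
theorem stmt_7 (m n : ℕ) (p : MvPolynomial (Fin m) ℂ) (hp : p.IsHomogeneous n)
    (hst : ∀ z : Fin m → ℂ, (∀ i, 0 < (z i).re) → MvPolynomial.eval z p ≠ 0)
    (Z : Fin m → ℂ) (hZ : ∀ i, 0 ≤ (Z i).re) :
    ‖MvPolynomial.eval Z p‖
      ≥ ‖MvPolynomial.eval (fun i => ((Z i).re : ℂ)) p‖ := by
  set f : ℝ → ℝ := fun ε => ‖MvPolynomial.eval (fun i => Z i + (ε:ℂ)) p‖ with hf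
  set g : ℝ → ℝ :=
    fun ε => ‖MvPolynomial.eval (fun i => (((Z i).re + ε : ℝ) : ℂ)) p‖ with hg
  have hkey : ∀ ε : ℝ, 0 < ε → g ε ≤ f ε := by
    intro ε hε
    have := stmt_aux m n p hp hst (fun i => Z i + (ε:ℂ)) (by
      intro i
      simp only [Complex.add_re, Complex.ofReal_re]
      exact add_pos_of_nonneg_of_pos (hZ i) hε)
    simpa [hf, hg, Complex.add_re] using this
  have hfc : Continuous f := by
    apply continuous_norm.comp
    exact (MvPolynomial.continuous_eval p).comp
      (continuous_pi fun i => continuous_const.add Complex.continuous_ofReal)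
  have hgc : Continuous g := by
    apply continuous_norm.comp
    exact (MvPolynomial.continuous_eval p).comp
      (continuous_pi fun i =>
        Complex.continuous_ofReal.comp (continuous_const.add continuous_id))
  have hne : (nhdsWithin (0:ℝ) (Set.Ioi 0)).NeBot := nhdsGT_neBot 0
  have hle : g 0 ≤ f 0 := by
    refine le_of_tendsto_of_tendsto (b := nhdsWithin (0:ℝ) (Set.Ioi 0))
      ((hgc.tendsto 0).mono_left nhdsWithin_le_nhds)
      ((hfc.tendsto 0).mono_left nhdsWithin_le_nhds) ?_
    filter_upwards [self_mem_nhdsWithin] with ε hε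
    exact hkey ε hε
  simpa [hf, hg] using hle
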